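/- Let K be a model of FF and let L be a purely inseparable algebraic field extension of K. Then σ extends uniquely to a ring endomorphism of L, and equipped with this extension L is a model of FF. -/

import Mathlib

/-! STATEMENT 6: if `K` is a model of FF and `L` is a purely inseparable algebraic
field extension of `K`, then `σ` extends uniquely to `L`, and any such extension makes
`L` a model of FF. -/

/-- Closed under twists: every `σ x` has all `p`-power roots. -/
def ClosedUnderTwists (p : ℕ) {F : Type*} [Field F] (σ : F →+* F) : Prop :=
  ∀ (x : F) (n : ℕ), ∃ y : F, y ^ p ^ n = σ x

/-- `x` is separably algebraic over the subfield `A`: a simple root of a polynomial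
with coefficients in `A`. -/
def IsSepAlgElemOver {Ω : Type*} [Field Ω] (A : Subfield Ω) (x : Ω) : Prop :=
  ∃ f : Polynomial Ω, (∀ n, f.coeff n ∈ A) ∧ Polynomial.eval x f = 0 ∧
    Polynomial.eval x (Polynomial.derivative f) ≠ 0

/-- A difference field `(F, σ)` of characteristic exponent `p` is a model of FF. -/
def IsFF (p : ℕ) {F : Type*} [Field F] (σ : F →+* F) : Prop :=
  ClosedUnderTwists p σ ∧
  ∀ x : F, IsSepAlgElemOver σ.fieldRange x → x ∈ σ.fieldRange


open Polynomial

/-- In a field of characteristic exponent `p`, `p^n`-th power map is injective. -/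
lemma FFaux.pow_injective {F : Type*} [Field F] (p : ℕ) [ExpChar F p] (n : ℕ)
    {a b : F} (h : a ^ p ^ n = b ^ p ^ n) : a = b :=
  iterateFrobenius_inj F p n (by simpa [iterateFrobenius_def] using h)

/-- If `x` is a simple root of a polynomial with coefficients in a subfield `N`,
and some `p^r`-th power of `x` lies in `N`, then `x ∈ N`. -/
lemma FFaux.mem_of_sep {F : Type*} [Field F] (p : ℕ) [ExpChar F p] (N : Subfield F)
    (x : F) (f : F[X]) (hc : ∀ n, f.coeff n ∈ N) (h0 : f.eval x = 0)
    (h1 : (derivative f).eval x ≠ 0) (r : ℕ) (hx : x ^ p ^ r ∈ N) : x ∈ N := by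
  haveI : ExpChar F[X] p := expChar_of_injective_ringHom (C_injective (R := F)) p
  have hq : (p : ℕ) ^ r ≠ 0 := pow_ne_zero _ (expChar_ne_zero F p)
  -- lift f to a polynomial over N
  set f₀ : Polynomial N := ∑ i ∈ f.support, C (⟨f.coeff i, hc i⟩ : N) * X ^ i with hf₀
  have halgmap : (algebraMap N F) = N.subtype := rfl
  have hmap : f₀.map N.subtype = f := by
    conv_rhs => rw [f.as_sum_support]
    rw [hf₀, Polynomial.map_sum]
    refine Finset.sum_congr rfl fun i _ => ?_
    rw [Polynomial.map_mul, Polynomial.map_C, Polynomial.map_pow, Polynomial.map_X,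
      C_mul_X_pow_eq_monomial]
    rfl
  have haev : ∀ q : Polynomial N, aeval x q = (q.map N.subtype).eval x := by
    intro q
    rw [aeval_def, ← eval_map, halgmap]
  -- x is integral over N
  have hint : IsIntegral N x := by
    refine ⟨X ^ p ^ r - C (⟨x ^ p ^ r, hx⟩ : N), monic_X_pow_sub_C _ hq, ?_⟩
    rw [eval₂_sub, eval₂_X_pow, eval₂_C, halgmap]
    exact sub_self _
  have h2 : minpoly N x ∣ f₀ := minpoly.dvd N x (by rw [haev, hmap, h0])
  have h3 : minpoly N x ∣ X ^ p ^ r - C (⟨x ^ p ^ r, hx⟩ : N) := by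
    refine minpoly.dvd N x ?_
    rw [haev, Polynomial.map_sub, Polynomial.map_pow, Polynomial.map_X, Polynomial.map_C,
      eval_sub, eval_pow, eval_X, eval_C]
    exact sub_self _
  -- map to F[X]
  have h4 : (minpoly N x).map N.subtype ∣ (X - C x) ^ p ^ r := by
    have := Polynomial.map_dvd N.subtype h3
    rwa [Polynomial.map_sub, Polynomial.map_pow, Polynomial.map_X, Polynomial.map_C,
      show (N.subtype ⟨x ^ p ^ r, hx⟩ : F) = x ^ p ^ r from rfl,
      C_pow, ← sub_pow_expChar_pow (p := p) (X : F[X]) (C x) r] at this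
  obtain ⟨i, hi, hassoc⟩ := (dvd_prime_pow (prime_X_sub_C x) _).mp h4
  have hmono : ((minpoly N x).map N.subtype).Monic := (minpoly.monic hint).map _
  have heq : (minpoly N x).map N.subtype = (X - C x) ^ i :=
    eq_of_monic_of_associated hmono ((monic_X_sub_C x).pow _) hassoc
  have hroot : ((minpoly N x).map N.subtype).eval x = 0 := by
    rw [← haev]; exact minpoly.aeval N x
  have hi0 : i ≠ 0 := by
    intro h
    rw [heq, h, pow_zero, eval_one] at hroot
    exact one_ne_zero hroot
  have hi1 : i = 1 := by
    rcases Nat.lt_or_ge i 2 with h | h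
    · omega
    · exfalso
      obtain ⟨g, hg⟩ := Polynomial.map_dvd N.subtype h2
      rw [heq] at hg
      rw [hmap] at hg
      apply h1
      rw [hg]
      simp [derivative_mul, derivative_pow, derivative_X_sub_C, sub_self,
        zero_pow (by omega : i - 1 ≠ 0), zero_pow (by omega : i ≠ 0)]
  rw [hi1, pow_one] at heq
  have hcoeff0 : (N.subtype ((minpoly N x).coeff 0) : F) = -x := by
    have := congrArg (fun q => Polynomial.coeff q 0) heq
    simpa [coeff_map] using this
  have : x = N.subtype (-(minpoly N x).coeff 0) := by
    rw [N.subtype.map_neg, hcoeff0, neg_neg]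
  rw [this]
  exact (-(minpoly N x).coeff 0).2

open Polynomial in
theorem statement6 {K L : Type*} [Field K] [Field L] (p : ℕ) [ExpChar K p]
    (σ : K →+* K) (hK : IsFF p σ)
    [Algebra K L]
    -- L is a purely inseparable algebraic extension of K
    (hins : ∀ x : L, ∃ n : ℕ, x ^ p ^ n ∈ (algebraMap K L).range) :
    -- σ extends uniquely to an endomorphism of L ...
    (∃! σL : L →+* L, ∀ x : K, σL (algebraMap K L x) = algebraMap K L (σ x)) ∧
    -- ... and any extension of σ to L makes L a model of FF
    (∀ σL : L →+* L, (∀ x : K, σL (algebraMap K L x) = algebraMap K L (σ x)) →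
      IsFF p σL) := by
  have halg : Function.Injective (algebraMap K L) := (algebraMap K L).injective
  haveI : ExpChar L p := expChar_of_injective_algebraMap halg p
  have hp0 : p ≠ 0 := expChar_ne_zero K p
  have injL : ∀ (n : ℕ) (a b : L), a ^ p ^ n = b ^ p ^ n → a = b :=
    fun n a b h => FFaux.pow_injective p n h
  have injK : ∀ (n : ℕ) (a b : K), a ^ p ^ n = b ^ p ^ n → a = b :=
    fun n a b h => FFaux.pow_injective p n h
  -- get plain existential form of hins
  have hins' : ∀ x : L, ∃ (n : ℕ) (a : K), algebraMap K L a = x ^ p ^ n := by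
    intro x
    obtain ⟨n, ha⟩ := hins x
    obtain ⟨a, ha'⟩ := ha
    exact ⟨n, a, ha'⟩
  -- key existence fact
  have E : ∀ x : L, ∃ z : L, ∀ (n : ℕ) (a : K),
      x ^ p ^ n = algebraMap K L a → z ^ p ^ n = algebraMap K L (σ a) := by
    intro x
    obtain ⟨n₀, a₀, ha₀⟩ := hins' x
    obtain ⟨y, hy⟩ := hK.1 a₀ n₀
    refine ⟨algebraMap K L y, fun n a ha => ?_⟩
    have h2 : a ^ p ^ n₀ = a₀ ^ p ^ n := by
      apply halg
      rw [map_pow, map_pow, ← ha, ha₀, ← pow_mul, ← pow_mul, mul_comm]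
    have h3 : (σ a) ^ p ^ n₀ = (y ^ p ^ n) ^ p ^ n₀ := by
      rw [← map_pow, h2, map_pow, ← hy, ← pow_mul, ← pow_mul, mul_comm]
    rw [← map_pow, injK n₀ _ _ h3, map_pow]
  set σf : L → L := fun x => Classical.choose (E x) with hσf
  have spec : ∀ (x : L) (n : ℕ) (a : K),
      x ^ p ^ n = algebraMap K L a → (σf x) ^ p ^ n = algebraMap K L (σ a) :=
    fun x => Classical.choose_spec (E x)
  -- σf is a ring hom
  have hone : σf 1 = 1 := by
    have := spec 1 0 1 (by simp)
    simpa using this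
  have hzero : σf 0 = 0 := by
    have := spec 0 0 0 (by simp)
    simpa using this
  have hmul : ∀ x y : L, σf (x * y) = σf x * σf y := by
    intro x y
    obtain ⟨n, a, ha⟩ := hins' x
    obtain ⟨m, b, hb⟩ := hins' y
    apply injL (n + m)
    have hx := spec x n a ha.symm
    have hy := spec y m b hb.symm
    have h1 : σf x ^ p ^ (n + m) = algebraMap K L (σ (a ^ p ^ m)) := by
      rw [map_pow, map_pow, ← hx, ← pow_mul, ← pow_add]
    have h2 : σf y ^ p ^ (n + m) = algebraMap K L (σ (b ^ p ^ n)) := by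
      rw [map_pow, map_pow, ← hy, ← pow_mul, ← pow_add, add_comm m n]
    have hxy := spec (x * y) (n + m) (a ^ p ^ m * b ^ p ^ n) ?_
    · rw [hxy, mul_pow, h1, h2, ← map_mul, ← map_mul]
    · rw [map_mul, map_pow, map_pow, ha, hb, mul_pow]
      congr 1
      · rw [← pow_mul, ← pow_add]
      · rw [← pow_mul, ← pow_add, add_comm n m]
  have hadd : ∀ x y : L, σf (x + y) = σf x + σf y := by
    intro x y
    obtain ⟨n, a, ha⟩ := hins' x
    obtain ⟨m, b, hb⟩ := hins' y
    apply injL (n + m)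
    have hx := spec x n a ha.symm
    have hy := spec y m b hb.symm
    have h1 : σf x ^ p ^ (n + m) = algebraMap K L (σ (a ^ p ^ m)) := by
      rw [map_pow, map_pow, ← hx, ← pow_mul, ← pow_add]
    have h2 : σf y ^ p ^ (n + m) = algebraMap K L (σ (b ^ p ^ n)) := by
      rw [map_pow, map_pow, ← hy, ← pow_mul, ← pow_add, add_comm m n]
    have hxy := spec (x + y) (n + m) (a ^ p ^ m + b ^ p ^ n) ?_
    · rw [hxy, add_pow_expChar_pow, h1, h2, ← map_add, ← map_add]
    · rw [map_add, map_pow, map_pow, ha, hb, add_pow_expChar_pow]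
      congr 1
      · rw [← pow_mul, ← pow_add]
      · rw [← pow_mul, ← pow_add, add_comm n m]
  set σL₀ : L →+* L :=
    { toFun := σf, map_one' := hone, map_mul' := hmul, map_zero' := hzero,
      map_add' := hadd } with hσL₀
  have hext : ∀ x : K, σL₀ (algebraMap K L x) = algebraMap K L (σ x) := by
    intro x
    have := spec (algebraMap K L x) 0 x (by simp)
    simp at this; exact this
  refine ⟨⟨σL₀, hext, ?_⟩, ?_⟩
  · -- uniqueness of the extension
    intro τ hτ
    ext x
    obtain ⟨n, a, ha⟩ := hins' x
    apply injL n
    have h1 : τ x ^ p ^ n = algebraMap K L (σ a) := by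
      rw [← map_pow, ← ha, hτ]
    rw [h1]
    exact (spec x n a ha.symm).symm
  · -- any extension makes L a model of FF
    intro σL hσL
    constructor
    · -- closed under twists
      intro x n
      obtain ⟨m, a, ha⟩ := hins' x
      obtain ⟨c, hc⟩ := hK.1 a (n + m)
      refine ⟨algebraMap K L c, ?_⟩
      apply injL m
      rw [← pow_mul, ← pow_add, ← map_pow, hc, ← map_pow σL, ← ha, hσL]
    · -- relative separable closedness
      intro x hx
      obtain ⟨f, hcoeff, hev, hev'⟩ := hx
      -- common twisting exponent for the coefficients
      have hRex : ∀ i : ℕ, ∃ r : ℕ, ∀ s : ℕ, r ≤ s →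
          ∃ b : K, algebraMap K L (σ b) = (f.coeff i) ^ p ^ s := by
        intro i
        obtain ⟨d, hd⟩ := hcoeff i
        obtain ⟨m, a, ha⟩ := hins' d
        refine ⟨m, fun s hs => ⟨a ^ p ^ (s - m), ?_⟩⟩
        rw [map_pow, map_pow, ← hσL, ha, map_pow, hd, ← pow_mul, ← pow_add,
          Nat.add_sub_cancel' hs]
      obtain ⟨m₀, a₀, ha₀⟩ := hins' x
      set R : ℕ := max m₀ (f.support.sup fun i => Classical.choose (hRex i)) with hRdef
      have hR : ∀ i : ℕ, ∃ b : K, algebraMap K L (σ b) = (f.coeff i) ^ p ^ R := by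
        intro i
        by_cases hi : i ∈ f.support
        · have h1 : Classical.choose (hRex i) ≤
              f.support.sup fun k => Classical.choose (hRex k) :=
            Finset.le_sup (f := fun k => Classical.choose (hRex k)) hi
          refine Classical.choose_spec (hRex i) R ?_
          rw [hRdef]
          exact le_trans h1 (le_max_right _ _)
        · exact ⟨0, by simp [Polynomial.notMem_support_iff.mp hi,
            zero_pow (pow_ne_zero R hp0)]⟩
      have hm₀R : m₀ ≤ R := by rw [hRdef]; exact le_max_left _ _
      have hu : algebraMap K L (a₀ ^ p ^ (R - m₀)) = x ^ p ^ R := by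
        rw [map_pow, ha₀, ← pow_mul, ← pow_add, Nat.add_sub_cancel' hm₀R]
      set u : K := a₀ ^ p ^ (R - m₀) with hudef
      set b : ℕ → K := fun i => Classical.choose (hR i) with hbdef
      have hb : ∀ i, algebraMap K L (σ (b i)) = (f.coeff i) ^ p ^ R :=
        fun i => Classical.choose_spec (hR i)
      set G : Polynomial K := ∑ i ∈ f.support, C (σ (b i)) * X ^ i with hGdef
      set φ : L →+* L := iterateFrobenius L p R with hφdef
      have hφx : ∀ z : L, φ z = z ^ p ^ R := fun z => iterateFrobenius_def p R z
      have hGmap : G.map (algebraMap K L) = f.map φ := by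
        ext j
        have h1 : (G.map (algebraMap K L)).coeff j = algebraMap K L (G.coeff j) :=
          coeff_map _ _
        have h2 : (f.map φ).coeff j = φ (f.coeff j) := coeff_map _ _
        rw [h1, h2, hGdef, finset_sum_coeff]
        simp only [coeff_C_mul_X_pow, map_sum, apply_ite (algebraMap K L), map_zero,
          Finset.sum_ite_eq]
        by_cases hj : j ∈ f.support
        · rw [if_pos hj, hb, hφx]
        · rw [if_neg hj, Polynomial.notMem_support_iff.mp hj, map_zero]
      have hmapu : algebraMap K L u = φ x := by rw [hφx, hu]
      have hGev : G.eval u = 0 := by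
        apply halg
        rw [map_zero, ← eval₂_hom (algebraMap K L) u, hmapu, ← eval_map, hGmap,
          eval_map, eval₂_hom, hev, map_zero]
      have hGev' : (derivative G).eval u ≠ 0 := by
        intro h0
        apply hev'
        apply φ.injective
        rw [map_zero]
        have hder : algebraMap K L ((derivative G).eval u) = φ ((derivative f).eval x) := by
          rw [← eval₂_hom (algebraMap K L) u, hmapu, ← eval_map, ← derivative_map, hGmap,
            derivative_map, eval_map, eval₂_hom]
        rw [← hder, h0, map_zero]
      have hGcoeff : ∀ j, G.coeff j ∈ σ.fieldRange := by
        intro j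
        rw [hGdef, finset_sum_coeff]
        apply sum_mem
        intro i _
        rw [coeff_C_mul_X_pow]
        by_cases hji : j = i
        · rw [if_pos hji]
          exact ⟨b i, rfl⟩
        · rw [if_neg hji]
          exact zero_mem _
      obtain ⟨e, he⟩ := hK.2 u ⟨G, hGcoeff, hGev, hGev'⟩
      have hxR : x ^ p ^ R ∈ σL.fieldRange := by
        refine ⟨algebraMap K L e, ?_⟩
        rw [hσL, he, hu]
      exact FFaux.mem_of_sep p σL.fieldRange x f hcoeff hev hev' R hxR
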